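/- Let f : ℝ^{n×r} → ℝ be continuously differentiable with L-Lipschitz gradient and h : ℝ^{n×r} → ℝ convex and L_h-Lipschitz; set F := f + h. Let 0 < κ₁ ≤ κ₂, σ ∈ (0,1), c₀ > 0, M₁ > 0, and let m be a nonnegative integer. Suppose sequences X_k ∈ St(n,r), V_k ∈ T_{X_k}, α_k ∈ [c₀,1], and linear maps B_k : ℝ^{n×r} → ℝ^{n×r}, self-adjoint for the trace inner product and mapping T_{X_k} into itself, satisfy for all k: (i) κ₁‖V‖² ≤ ⟨V, B_k V⟩ ≤ κ₂‖V‖² for all V ∈ T_{X_k}; (ii) V_k minimizes φ_k(V) := ⟨∇f(X_k),V⟩ + (1/2)⟨V, B_k V⟩ + h(X_k+V) over T_{X_k}; (iii) ‖X_{k+1} − X_k‖ ≤ M₁ α_k ‖V_k‖; (iv) F(X_{k+1}) ≤ max_{max(k−m,0) ≤ j ≤ k} F(X_j) − (σ/2) α_k ⟨V_k, B_k V_k⟩. Then every accumulation point X* of the sequence (X_k) is a stationary point of the problem of minimizing F over St(n,r): there exists ξ ∈ ∂h(X*) such that P_{X*}(∇f(X*) + ξ) = 0. -/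

import Mathlib

open Matrix Filter

/-- The trace inner product `⟨A, B⟩ = tr(AᵀB)` on `ℝ^{n×r}`. -/
noncomputable def tinner {n r : ℕ} (A B : Matrix (Fin n) (Fin r) ℝ) : ℝ := (Aᵀ * B).trace

/-- `V` belongs to the tangent space `T_X = {V : VᵀX + XᵀV = 0}` of the Stiefel manifold at `X`. -/
def IsTangent {n r : ℕ} (X V : Matrix (Fin n) (Fin r) ℝ) : Prop := Vᵀ * X + Xᵀ * V = 0

/-- The orthogonal projection `P_X Z = Z - (1/2) X (XᵀZ + ZᵀX)` onto `T_X`. -/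
noncomputable def projT {n r : ℕ} (X Z : Matrix (Fin n) (Fin r) ℝ) : Matrix (Fin n) (Fin r) ℝ :=
  Z - (1 / 2 : ℝ) • (X * (Xᵀ * Z + Zᵀ * X))

-- The norm `‖·‖` (and the topology) below come from the Frobenius norm,
-- associated to the trace inner product.
attribute [local instance] Matrix.frobeniusNormedAddCommGroup Matrix.frobeniusNormedSpace

section helpers
variable {n r : ℕ}
local notation "Mat" => Matrix (Fin n) (Fin r) ℝ

lemma tinner_eq_sum (A B : Mat) : tinner A B = ∑ i, ∑ j, A i j * B i j := by
  unfold tinner Matrix.trace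
  simp [Matrix.mul_apply, Matrix.diag, Matrix.transpose_apply]
  rw [Finset.sum_comm]

lemma tinner_comm (A B : Mat) : tinner A B = tinner B A := by
  simp only [tinner_eq_sum, mul_comm]

lemma tinner_add_right (A B C : Mat) : tinner A (B + C) = tinner A B + tinner A C := by
  simp [tinner_eq_sum, mul_add, Finset.sum_add_distrib]

lemma tinner_add_left (A B C : Mat) : tinner (A + B) C = tinner A C + tinner B C := by
  simp [tinner_eq_sum, add_mul, Finset.sum_add_distrib]

lemma tinner_smul_right (c : ℝ) (A B : Mat) : tinner A (c • B) = c * tinner A B := by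
  simp [tinner_eq_sum, Finset.mul_sum, Matrix.smul_apply]; ring_nf
  simp [mul_comm, mul_left_comm]

lemma tinner_smul_left (c : ℝ) (A B : Mat) : tinner (c • A) B = c * tinner A B := by
  rw [tinner_comm, tinner_smul_right, tinner_comm]

lemma tinner_sub_right (A B C : Mat) : tinner A (B - C) = tinner A B - tinner A C := by
  simp [tinner_eq_sum, mul_sub, Finset.sum_sub_distrib]

lemma tinner_self (A : Mat) : tinner A A = ‖A‖ ^ 2 := by
  rw [Matrix.frobenius_norm_def]
  rw [← Real.rpow_natCast ((∑ i, ∑ j, ‖A i j‖ ^ 2) ^ ((1:ℝ)/2)) 2]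
  rw [← Real.rpow_mul (by positivity)]
  norm_num
  simp [tinner_eq_sum, Real.norm_eq_abs, sq_abs]
  ring_nf

lemma tinner_cs (A B : Mat) : |tinner A B| ≤ ‖A‖ * ‖B‖ := by
  have h1 : (tinner A B) ^ 2 ≤ (tinner A A) * (tinner B B) := by
    rw [tinner_eq_sum A B, tinner_eq_sum A A, tinner_eq_sum B B]
    calc (∑ i, ∑ j, A i j * B i j) ^ 2
        = (∑ p : Fin n × Fin r, A p.1 p.2 * B p.1 p.2) ^ 2 := by
          rw [← Finset.sum_product']; rfl
      _ ≤ (∑ p : Fin n × Fin r, A p.1 p.2 ^ 2) * (∑ p : Fin n × Fin r, B p.1 p.2 ^ 2) :=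
          Finset.sum_mul_sq_le_sq_mul_sq _ _ _
      _ = (∑ i, ∑ j, A i j * A i j) * (∑ i, ∑ j, B i j * B i j) := by
          rw [← Finset.sum_product', ← Finset.sum_product']; simp [sq]
  have h2 : 0 ≤ ‖A‖ * ‖B‖ := by positivity
  rw [tinner_self, tinner_self] at h1
  nlinarith [abs_nonneg (tinner A B), sq_abs (tinner A B)]

lemma continuous_tinner : Continuous (fun p : Mat × Mat => tinner p.1 p.2) := by
  simp only [tinner_eq_sum]
  refine continuous_finset_sum _ fun i _ => continuous_finset_sum _ fun j _ => ?_
  exact (continuous_fst.matrix_elem i j).mul (continuous_snd.matrix_elem i j)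

lemma tendsto_entry {ι : Type*} {l : Filter ι} {a : ι → Mat} {A : Mat}
    (ha : Tendsto a l (nhds A)) (x : Fin n) (y : Fin r) :
    Tendsto (fun i => a i x y) l (nhds (A x y)) := by
  have hc : Continuous fun M : Mat => M x y := (continuous_apply y).comp (continuous_apply x)
  exact (hc.tendsto A).comp ha

lemma tendsto_tinner {ι : Type*} {l : Filter ι} {a b : ι → Mat} {A B0 : Mat}
    (ha : Tendsto a l (nhds A)) (hb : Tendsto b l (nhds B0)) :
    Tendsto (fun i => tinner (a i) (b i)) l (nhds (tinner A B0)) := by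
  simp only [tinner_eq_sum]
  apply tendsto_finset_sum
  intro x _
  apply tendsto_finset_sum
  intro y _
  exact (tendsto_entry ha x y).mul (tendsto_entry hb x y)

lemma isTangent_zero (X : Mat) : IsTangent X 0 := by
  unfold IsTangent; simp

lemma IsTangent.add' {X U W : Mat} (hU : IsTangent X U) (hW : IsTangent X W) :
    IsTangent X (U + W) := by
  unfold IsTangent at *
  rw [Matrix.transpose_add, Matrix.add_mul, Matrix.mul_add]
  calc Uᵀ * X + Wᵀ * X + (Xᵀ * U + Xᵀ * W) = (Uᵀ * X + Xᵀ * U) + (Wᵀ * X + Xᵀ * W) := by abel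
    _ = 0 := by rw [hU, hW, add_zero]

lemma IsTangent.smul' {X U : Mat} (c : ℝ) (hU : IsTangent X U) : IsTangent X (c • U) := by
  unfold IsTangent at *
  rw [Matrix.transpose_smul, Matrix.smul_mul, Matrix.mul_smul, ← smul_add, hU, smul_zero]

lemma IsTangent.sub' {X U W : Mat} (hU : IsTangent X U) (hW : IsTangent X W) :
    IsTangent X (U - W) := by
  simpa [sub_eq_add_neg] using hU.add' (hW.smul' (-1))

lemma isTangent_projT {X : Mat} (hX : Xᵀ * X = 1) (Z : Mat) : IsTangent X (projT X Z) := by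
  unfold IsTangent projT
  set S := Xᵀ * Z + Zᵀ * X with hS
  have hSsymm : Sᵀ = S := by
    rw [hS, Matrix.transpose_add, Matrix.transpose_mul, Matrix.transpose_mul,
      Matrix.transpose_transpose, Matrix.transpose_transpose, add_comm]
  rw [Matrix.transpose_sub, Matrix.transpose_smul, Matrix.transpose_mul, Matrix.sub_mul,
    Matrix.mul_sub, Matrix.smul_mul, Matrix.mul_smul, Matrix.mul_assoc]
  rw [hX, Matrix.mul_one, hSsymm, ← Matrix.mul_assoc, hX, Matrix.one_mul]
  rw [sub_add_sub_comm, show Zᵀ * X + Xᵀ * Z = S by rw [hS]; abel, ← add_smul]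
  norm_num

lemma projT_of_tangent {X W : Mat} (hW : IsTangent X W) : projT X W = W := by
  unfold projT
  rw [show Xᵀ * W + Wᵀ * X = 0 by rw [← hW]; abel]
  simp

lemma tinner_normal_tangent {X Z U : Mat} (hX : Xᵀ * X = 1) (hU : IsTangent X U) :
    tinner (Z - projT X Z) U = 0 := by
  have hZP : Z - projT X Z = X * ((1/2 : ℝ) • (Xᵀ * Z + Zᵀ * X)) := by
    unfold projT; rw [Matrix.mul_smul]; abel
  rw [hZP]
  set S := (1/2 : ℝ) • (Xᵀ * Z + Zᵀ * X) with hS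
  have hSsymm : Sᵀ = S := by
    rw [hS, Matrix.transpose_smul, Matrix.transpose_add, Matrix.transpose_mul,
      Matrix.transpose_mul, Matrix.transpose_transpose, Matrix.transpose_transpose, add_comm]
  have hskew : (Xᵀ * U)ᵀ = -(Xᵀ * U) := by
    rw [Matrix.transpose_mul, Matrix.transpose_transpose]
    exact eq_neg_of_add_eq_zero_left hU
  unfold tinner
  have e1 : (X * S)ᵀ * U = S * (Xᵀ * U) := by
    rw [Matrix.transpose_mul, hSsymm, Matrix.mul_assoc]
  rw [e1]
  have h2 : (S * (Xᵀ * U)).trace = -((S * (Xᵀ * U)).trace) := by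
    conv_lhs => rw [← Matrix.trace_transpose]
    rw [Matrix.transpose_mul, hskew, hSsymm, Matrix.neg_mul, Matrix.trace_neg,
      Matrix.trace_mul_comm]
  linarith

lemma projT_eq_zero_of_orth {X Z : Mat} (hX : Xᵀ * X = 1)
    (hZ : ∀ U, IsTangent X U → tinner Z U = 0) : projT X Z = 0 := by
  have ht := isTangent_projT hX Z
  have h1 : tinner (projT X Z) (projT X Z) = 0 := by
    have e : tinner (projT X Z) (projT X Z)
        = tinner Z (projT X Z) - tinner (Z - projT X Z) (projT X Z) := by
      simp only [tinner_eq_sum, Matrix.sub_apply, sub_mul, Finset.sum_sub_distrib]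
      ring
    rw [e, hZ _ ht, tinner_normal_tangent hX ht, sub_zero]
  rw [tinner_self] at h1
  exact norm_eq_zero.mp (pow_eq_zero_iff (n := 2) (by norm_num) |>.mp h1)

lemma continuous_projT (Z : Mat) : Continuous fun X : Mat => projT X Z := by
  unfold projT
  refine continuous_const.sub ((continuous_const_smul (1 / 2 : ℝ)).comp (?_ : Continuous fun X : Mat => X * (Xᵀ * Z + Zᵀ * X)))
  exact continuous_id.matrix_mul (((continuous_id.matrix_transpose).matrix_mul
    continuous_const).add (continuous_const.matrix_mul continuous_id))

lemma exists_stationary_subgrad (h : Mat → ℝ) (Lh : ℝ)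
    (hconv : ConvexOn ℝ Set.univ h)
    (hLiph : ∀ A B, |h A - h B| ≤ Lh * ‖A - B‖)
    (Xs G : Mat) (hXs : Xsᵀ * Xs = 1)
    (key : ∀ W, IsTangent Xs W → h Xs ≤ h (Xs + W) + tinner G W) :
    ∃ ξ, (∀ Z, h Xs + tinner ξ (Z - Xs) ≤ h Z) ∧ projT Xs (G + ξ) = 0 := by
  classical
  set slope : Mat → ℝ → ℝ := fun x t => (h (Xs + t • x) - h Xs) / t with hslope
  set S : Mat → Set ℝ := fun x => slope x '' Set.Ioi 0 with hsdef
  set p : Mat → ℝ := fun x => sInf (S x) with hp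
  have hSne : ∀ x, (S x).Nonempty := fun x => ⟨slope x 1, 1, Set.mem_Ioi.mpr one_pos, rfl⟩
  have hbdd : ∀ x, ∀ q ∈ S x, -(Lh * ‖x‖) ≤ q := by
    rintro x q ⟨t, ht, rfl⟩
    rw [Set.mem_Ioi] at ht
    have h1 := hLiph (Xs + t • x) Xs
    rw [add_sub_cancel_left, norm_smul, Real.norm_eq_abs, abs_of_pos ht] at h1
    have h2 := (abs_le.mp h1).1
    rw [hslope, le_div_iff₀ ht]
    nlinarith
  have hbddB : ∀ x, BddBelow (S x) := fun x => ⟨-(Lh * ‖x‖), hbdd x⟩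
  have hmono : ∀ x : Mat, ∀ s t : ℝ, 0 < s → s ≤ t → slope x s ≤ slope x t := by
    intro x s t hs ht0
    have ht : 0 < t := lt_of_lt_of_le hs ht0
    have hb0 : 0 ≤ s / t := le_of_lt (div_pos hs ht)
    have hb1 : s / t ≤ 1 := (div_le_one ht).mpr ht0
    have e0 : (0:ℝ) ≤ 1 - s / t := by linarith
    have e1 : s / t + (1 - s / t) = 1 := by ring
    have hcx := hconv.2 (Set.mem_univ (Xs + t • x)) (Set.mem_univ Xs) hb0 e0 e1
    have hpt : (s / t) • (Xs + t • x) + (1 - s / t) • Xs = Xs + s • x := by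
      have hbt : s / t * t = s := div_mul_cancel₀ s (ne_of_gt ht)
      calc (s / t) • (Xs + t • x) + (1 - s / t) • Xs = Xs + (s / t * t) • x := by module
        _ = Xs + s • x := by rw [hbt]
    rw [hpt] at hcx
    rw [hslope, div_le_div_iff₀ hs ht]
    simp only [smul_eq_mul] at hcx
    have h3 : t * h (Xs + s • x) ≤ (t - s) * h Xs + s * h (Xs + t • x) := by
      have h4 := mul_le_mul_of_nonneg_left hcx (le_of_lt ht)
      calc t * h (Xs + s • x) ≤ t * (s / t * h (Xs + t • x) + (1 - s / t) * h Xs) := h4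
        _ = (t - s) * h Xs + s * h (Xs + t • x) := by field_simp; ring
    nlinarith
  have hkeyhom : ∀ (c : ℝ), 0 < c → ∀ x (t : ℝ), 0 < t →
      slope (c • x) t = c * slope x (t * c) := by
    intro c hc x t ht
    rw [hslope]
    simp only [smul_smul]
    rw [mul_comm t c]
    have htc : (0:ℝ) < c * t := mul_pos hc ht
    field_simp
  have hhom : ∀ c : ℝ, 0 < c → ∀ x, p (c • x) = c * p x := by
    intro c hc x
    apply le_antisymm
    · rw [mul_comm, ← div_le_iff₀ hc]
      apply le_csInf (hSne x)
      rintro q ⟨t, ht, rfl⟩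
      rw [Set.mem_Ioi] at ht
      rw [div_le_iff₀ hc, mul_comm (slope x t) c]
      have e1 : slope (c • x) (t / c) = c * slope x t := by
        rw [hkeyhom c hc x (t / c) (div_pos ht hc), div_mul_cancel₀ t (ne_of_gt hc)]
      rw [← e1]
      exact csInf_le (hbddB _) ⟨t / c, Set.mem_Ioi.mpr (div_pos ht hc), rfl⟩
    · apply le_csInf (hSne (c • x))
      rintro q ⟨t, ht, rfl⟩
      rw [Set.mem_Ioi] at ht
      rw [hkeyhom c hc x t ht]
      have : p x ≤ slope x (t * c) := csInf_le (hbddB x) ⟨t * c, Set.mem_Ioi.mpr (mul_pos ht hc), rfl⟩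
      exact mul_le_mul_of_nonneg_left this (le_of_lt hc)
  have hsub : ∀ x y, p (x + y) ≤ p x + p y := by
    intro x y
    apply le_of_forall_pos_le_add
    intro ε hε
    obtain ⟨q1, hq1mem, hq1⟩ := Real.lt_sInf_add_pos (hSne x) (half_pos hε)
    obtain ⟨q2, hq2mem, hq2⟩ := Real.lt_sInf_add_pos (hSne y) (half_pos hε)
    obtain ⟨t1, ht1, rfl⟩ := hq1mem
    obtain ⟨t2, ht2, rfl⟩ := hq2mem
    rw [Set.mem_Ioi] at ht1 ht2
    set t0 : ℝ := min t1 t2 with ht0def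
    have ht0 : 0 < t0 := lt_min ht1 ht2
    have hcomb : slope (x + y) (t0 / 2) ≤ slope x t0 + slope y t0 := by
      have hhalf : Xs + (t0 / 2) • (x + y) = (1/2 : ℝ) • (Xs + t0 • x) + (1/2 : ℝ) • (Xs + t0 • y) := by
        module
      have e0 : (0:ℝ) ≤ 1/2 := by norm_num
      have e1 : (1/2 : ℝ) + 1/2 = 1 := by norm_num
      have hcx := hconv.2 (Set.mem_univ (Xs + t0 • x)) (Set.mem_univ (Xs + t0 • y)) e0 e0 e1
      rw [← hhalf] at hcx
      simp only [smul_eq_mul] at hcx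
      have ht02 : (0:ℝ) < t0 / 2 := by positivity
      rw [hslope, div_add_div _ _ (ne_of_gt ht0) (ne_of_gt ht0)]
      show (h (Xs + (t0 / 2) • (x + y)) - h Xs) / (t0 / 2) ≤ _
      rw [div_le_div_iff₀ ht02 (by positivity)]
      nlinarith [mul_le_mul_of_nonneg_left hcx (le_of_lt ht0)]
    have h1 : p (x + y) ≤ slope (x + y) (t0 / 2) :=
      csInf_le (hbddB _) ⟨t0 / 2, Set.mem_Ioi.mpr (by positivity), rfl⟩
    have h2 : slope x t0 ≤ slope x t1 := hmono x t0 t1 ht0 (min_le_left _ _)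
    have h3 : slope y t0 ≤ slope y t2 := hmono y t0 t2 ht0 (min_le_right _ _)
    have hpx : ∀ z : Mat, p z = sInf (S z) := fun _ => rfl
    rw [hpx (x + y), hpx x, hpx y] at *
    linarith
  set T : Submodule ℝ Mat :=
    { carrier := {W | IsTangent Xs W}
      add_mem' := fun ha hb => ha.add' hb
      zero_mem' := isTangent_zero Xs
      smul_mem' := fun c _ ha => ha.smul' c } with hT
  set ℓlin : T →ₗ[ℝ] ℝ :=
    { toFun := fun W => -tinner G (W : Mat)
      map_add' := by intro a b; simp [tinner_add_right]; ring
      map_smul' := by intro c a; simp [tinner_smul_right] } with hℓ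
  have hdom : ∀ x : T, (x : Mat) ∈ {W | IsTangent Xs W} := fun x => x.2
  have hfle : ∀ x : T, ℓlin x ≤ p (x : Mat) := by
    intro x
    apply le_csInf (hSne _)
    rintro q ⟨t, ht, rfl⟩
    rw [Set.mem_Ioi] at ht
    have htan : IsTangent Xs (t • (x : Mat)) := (hdom x).smul' t
    have hk := key _ htan
    rw [tinner_smul_right] at hk
    rw [hℓ]
    simp only [LinearMap.coe_mk, AddHom.coe_mk]
    rw [hslope, le_div_iff₀ ht]
    nlinarith
  obtain ⟨Gl, hGl1, hGl2⟩ :=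
    exists_extension_of_le_sublinear ⟨T, ℓlin⟩ p (fun c hc x => hhom c hc x) hsub hfle
  set ξ : Mat := Matrix.of fun i j => Gl (Matrix.single i j 1) with hξ
  have hstd : ∀ (i : Fin n) (j : Fin r) (c : ℝ),
      Matrix.single i j c = c • Matrix.single i j 1 := by
    intro i j c
    ext a b
    simp [Matrix.single, Matrix.smul_apply, mul_ite]
  have hξd : ∀ d : Mat, tinner ξ d = Gl d := by
    intro d
    conv_rhs => rw [Matrix.matrix_eq_sum_single d]
    rw [map_sum, tinner_eq_sum]
    apply Finset.sum_congr rfl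
    intro i _
    rw [map_sum]
    apply Finset.sum_congr rfl
    intro j _
    rw [hstd i j (d i j), _root_.map_smul, smul_eq_mul, hξ]
    simp [Matrix.of_apply, mul_comm]
  refine ⟨ξ, ?_, ?_⟩
  · intro Z
    have h1 : Gl (Z - Xs) ≤ p (Z - Xs) := hGl2 _
    have h2 : p (Z - Xs) ≤ slope (Z - Xs) 1 :=
      csInf_le (hbddB _) ⟨1, Set.mem_Ioi.mpr one_pos, rfl⟩
    have h3 : slope (Z - Xs) 1 = h Z - h Xs := by
      rw [hslope]; simp
    rw [hξd]
    linarith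
  · apply projT_eq_zero_of_orth hXs
    intro U hU
    rw [tinner_add_left, hξd]
    have h5 := hGl1 ⟨U, hU⟩
    rw [h5, LinearPMap.mk_apply, hℓ]
    simp only [LinearMap.coe_mk, AddHom.coe_mk]
    show tinner G U + -tinner G U = 0
    ring

end helpers
set_option maxHeartbeats 1000000 in
theorem stmt10 {n r : ℕ} (f h : Matrix (Fin n) (Fin r) ℝ → ℝ)
    -- `f` is continuously differentiable with gradient function `g = ∇f`, which is `L`-Lipschitz
    (g : Matrix (Fin n) (Fin r) ℝ → Matrix (Fin n) (Fin r) ℝ)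
    (Lf : Matrix (Fin n) (Fin r) ℝ → (Matrix (Fin n) (Fin r) ℝ →L[ℝ] ℝ))
    (hf : ∀ Z, HasFDerivAt f (Lf Z) Z) (hGrad : ∀ Z V, Lf Z V = tinner (g Z) V)
    (L Lh κ₁ κ₂ σ c₀ M₁ : ℝ) (m : ℕ)
    (hLipg : ∀ A B, ‖g A - g B‖ ≤ L * ‖A - B‖)
    -- `h` is convex and `L_h`-Lipschitz
    (hconv : ConvexOn ℝ Set.univ h)
    (hLiph : ∀ A B, |h A - h B| ≤ Lh * ‖A - B‖)
    (hκ₁ : 0 < κ₁) (hκ₁₂ : κ₁ ≤ κ₂) (hσ : σ ∈ Set.Ioo (0 : ℝ) 1)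
    (hc₀ : 0 < c₀) (hM₁ : 0 < M₁)
    -- the sequences
    (X V : ℕ → Matrix (Fin n) (Fin r) ℝ) (α : ℕ → ℝ)
    (B : ℕ → (Matrix (Fin n) (Fin r) ℝ →ₗ[ℝ] Matrix (Fin n) (Fin r) ℝ))
    (hXSt : ∀ k, (X k)ᵀ * X k = 1)
    (hVt : ∀ k, IsTangent (X k) (V k))
    (hα : ∀ k, α k ∈ Set.Icc c₀ 1)
    -- each `B_k` is self-adjoint and maps `T_{X_k}` into itself
    (hBsa : ∀ k U W, tinner U (B k W) = tinner (B k U) W)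
    (hBtan : ∀ k W, IsTangent (X k) W → IsTangent (X k) (B k W))
    -- (i) uniform bounds on the quadratic form of `B_k` over `T_{X_k}`
    (hBbound : ∀ k W, IsTangent (X k) W →
      κ₁ * ‖W‖ ^ 2 ≤ tinner W (B k W) ∧ tinner W (B k W) ≤ κ₂ * ‖W‖ ^ 2)
    -- (ii) `V_k` minimizes `φ_k` over `T_{X_k}`
    (hmin : ∀ k W, IsTangent (X k) W →
      tinner (g (X k)) (V k) + (1 / 2) * tinner (V k) (B k (V k)) + h (X k + V k) ≤
        tinner (g (X k)) W + (1 / 2) * tinner W (B k W) + h (X k + W))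
    -- (iii)
    (hstep : ∀ k, ‖X (k + 1) - X k‖ ≤ M₁ * α k * ‖V k‖)
    -- (iv) nonmonotone sufficient decrease
    (hdec : ∀ k, f (X (k + 1)) + h (X (k + 1)) ≤
      (Finset.Icc (k - m) k).sup' (Finset.nonempty_Icc.mpr (Nat.sub_le k m))
          (fun j => f (X j) + h (X j))
        - σ / 2 * α k * tinner (V k) (B k (V k))) :
    -- every accumulation point of `(X_k)` is a stationary point
    ∀ Xs : Matrix (Fin n) (Fin r) ℝ,
      (∃ φ : ℕ → ℕ, StrictMono φ ∧ Tendsto (fun i => X (φ i)) atTop (nhds Xs)) →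
      ∃ ξ, (∀ Z, h Xs + tinner ξ (Z - Xs) ≤ h Z) ∧ projT Xs (g Xs + ξ) = 0 := by
  rintro Xs ⟨φ, hφmono, hφtend⟩
  -- basic continuity facts
  have hconth : Continuous h := by
    refine (LipschitzWith.of_dist_le_mul (K := Real.toNNReal Lh) fun a b => ?_).continuous
    calc dist (h a) (h b) = |h a - h b| := Real.dist_eq _ _
      _ ≤ Lh * ‖a - b‖ := hLiph a b
      _ ≤ Real.toNNReal Lh * ‖a - b‖ :=
          mul_le_mul_of_nonneg_right (Real.le_coe_toNNReal Lh) (norm_nonneg _)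
      _ = Real.toNNReal Lh * dist a b := by rw [dist_eq_norm]
  have hcontg : Continuous g := by
    refine (LipschitzWith.of_dist_le_mul (K := Real.toNNReal L) fun a b => ?_).continuous
    calc dist (g a) (g b) = ‖g a - g b‖ := dist_eq_norm _ _
      _ ≤ L * ‖a - b‖ := hLipg a b
      _ ≤ Real.toNNReal L * ‖a - b‖ :=
          mul_le_mul_of_nonneg_right (Real.le_coe_toNNReal L) (norm_nonneg _)
      _ = Real.toNNReal L * dist a b := by rw [dist_eq_norm]
  have hcontf : Continuous f := continuous_iff_continuousAt.mpr fun Z => (hf Z).continuousAt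
  set FF : Matrix (Fin n) (Fin r) ℝ → ℝ := fun Y => f Y + h Y with hFFdef
  have hcontFF : Continuous FF := hcontf.add hconth
  -- the Stiefel manifold is compact
  set St : Set (Matrix (Fin n) (Fin r) ℝ) := {Y | Yᵀ * Y = 1} with hStdef
  have hStnorm : ∀ Y ∈ St, ‖Y‖ = Real.sqrt r := by
    intro Y hY
    have h1 : ‖Y‖ ^ 2 = (r : ℝ) := by
      rw [← tinner_self]
      unfold tinner
      rw [show Yᵀ * Y = 1 from hY, Matrix.trace_one]
      simp
    rw [← h1, Real.sqrt_sq (norm_nonneg _)]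
  have hStcompact : IsCompact St := by
    apply Metric.isCompact_of_isClosed_isBounded
    · exact isClosed_eq ((continuous_id.matrix_transpose).matrix_mul continuous_id)
        continuous_const
    · refine (Metric.isBounded_closedBall (x := 0) (r := Real.sqrt r)).subset fun Y hY => ?_
      rw [Metric.mem_closedBall, dist_zero_right, hStnorm Y hY]
  -- sequence quantities
  set Fs : ℕ → ℝ := fun j => f (X j) + h (X j) with hFsdef
  set δ : ℕ → ℝ := fun k => σ / 2 * α k * tinner (V k) (B k (V k)) with hδdef
  set Ms : ℕ → ℝ := fun k =>
    (Finset.Icc (k - m) k).sup' (Finset.nonempty_Icc.mpr (Nat.sub_le k m)) Fs with hMsdef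
  have hδ_lb : ∀ k, σ / 2 * c₀ * κ₁ * ‖V k‖ ^ 2 ≤ δ k := by
    intro k
    have h1 := (hBbound k (V k) (hVt k)).1
    have h2 := (hα k).1
    have h3 := (hα k).2
    have hq : 0 ≤ tinner (V k) (B k (V k)) := le_trans (by positivity) h1
    have hσ0 := hσ.1
    have e0 : σ / 2 * c₀ * κ₁ * ‖V k‖ ^ 2 ≤ σ / 2 * c₀ * tinner (V k) (B k (V k)) := by
      have h5 := mul_le_mul_of_nonneg_left h1
        (show (0:ℝ) ≤ σ / 2 * c₀ from (mul_pos (half_pos hσ.1) hc₀).le)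
      nlinarith
    have e1 : σ / 2 * c₀ * tinner (V k) (B k (V k)) ≤ σ / 2 * α k * tinner (V k) (B k (V k)) := by
      have h6 : σ / 2 * c₀ ≤ σ / 2 * α k :=
        mul_le_mul_of_nonneg_left h2 (half_pos hσ.1).le
      exact mul_le_mul_of_nonneg_right h6 hq
    show σ / 2 * c₀ * κ₁ * ‖V k‖ ^ 2 ≤ σ / 2 * α k * tinner (V k) (B k (V k))
    linarith
  have hcpos3 : (0:ℝ) < σ / 2 * c₀ * κ₁ := mul_pos (mul_pos (half_pos hσ.1) hc₀) hκ₁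
  have hδ0 : ∀ k, 0 ≤ δ k := fun k => le_trans (mul_nonneg hcpos3.le (sq_nonneg _)) (hδ_lb k)
  have hFsMs : ∀ k, Fs k ≤ Ms k := fun k =>
    Finset.le_sup' Fs (Finset.mem_Icc.mpr ⟨Nat.sub_le k m, le_refl k⟩)
  have hdec' : ∀ k, Fs (k + 1) ≤ Ms k - δ k := fun k => hdec k
  have hManti : Antitone Ms := by
    apply antitone_nat_of_succ_le
    intro k
    apply Finset.sup'_le
    intro j hj
    rw [Finset.mem_Icc] at hj
    rcases Nat.lt_or_ge j (k + 1) with hlt | hge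
    · exact Finset.le_sup' Fs (Finset.mem_Icc.mpr ⟨by omega, by omega⟩)
    · have : j = k + 1 := by omega
      subst this
      linarith [hdec' k, hδ0 k]
  -- lower bound
  obtain ⟨Ybar, hYbarSt, hYbarmin⟩ := hStcompact.exists_isMinOn ⟨X 0, hXSt 0⟩
    hcontFF.continuousOn
  have hMbdd : ∀ k, FF Ybar ≤ Ms k := fun k =>
    le_trans (hYbarmin (hXSt k)) (hFsMs k)
  set Minf : ℝ := ⨅ k, Ms k with hMinfdef
  have hMtend : Tendsto Ms atTop (nhds Minf) := by
    apply tendsto_atTop_ciInf hManti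
    exact ⟨FF Ybar, by rintro _ ⟨k, rfl⟩; exact hMbdd k⟩
  -- the argmax index
  have hℓex : ∀ k, ∃ i ∈ Finset.Icc (k - m) k, Ms k = Fs i := fun k =>
    Finset.exists_mem_eq_sup' (Finset.nonempty_Icc.mpr (Nat.sub_le k m)) Fs
  choose ℓfun hℓmem hℓeq using hℓex
  have hℓlb : ∀ k, k - m ≤ ℓfun k := fun k => (Finset.mem_Icc.mp (hℓmem k)).1
  have hℓub : ∀ k, ℓfun k ≤ k := fun k => (Finset.mem_Icc.mp (hℓmem k)).2
  have hℓtend : Tendsto ℓfun atTop atTop :=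
    tendsto_atTop_mono hℓlb (tendsto_sub_atTop_nat m)
  -- uniform continuity of FF on St
  have hUC := hStcompact.uniformContinuousOn_of_continuous hcontFF.continuousOn
  replace hUC := Metric.uniformContinuousOn_iff.mp hUC
  -- the key induction
  have stepR : ∀ j : ℕ, Tendsto (fun k => Fs (ℓfun k - j)) atTop (nhds Minf) →
      Tendsto (fun k => ‖V (ℓfun k - (j + 1))‖) atTop (nhds 0) := by
    intro j hQ
    have hMcomp : Tendsto (fun k => Ms (ℓfun k - (j + 1))) atTop (nhds Minf) :=
      hMtend.comp ((tendsto_sub_atTop_nat (j + 1)).comp hℓtend)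
    have hub : ∀ᶠ k in atTop, δ (ℓfun k - (j + 1)) ≤ Ms (ℓfun k - (j + 1)) - Fs (ℓfun k - j) := by
      filter_upwards [hℓtend.eventually_ge_atTop (j + 1)] with k hk
      have he : (ℓfun k - (j + 1)) + 1 = ℓfun k - j := by omega
      have h1 := hdec' (ℓfun k - (j + 1))
      rw [he] at h1
      linarith
    have h0 : Tendsto (fun k => Ms (ℓfun k - (j + 1)) - Fs (ℓfun k - j)) atTop (nhds 0) := by
      have := hMcomp.sub hQ
      simpa using this
    have hδt : Tendsto (fun k => δ (ℓfun k - (j + 1))) atTop (nhds 0) :=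
      tendsto_of_tendsto_of_tendsto_of_le_of_le' tendsto_const_nhds h0
        (Eventually.of_forall fun k => hδ0 _) hub
    set c : ℝ := σ / 2 * c₀ * κ₁ with hcdef
    have hcpos : 0 < c := by rw [hcdef]; exact hcpos3
    have hsq : Tendsto (fun k => ‖V (ℓfun k - (j + 1))‖ ^ 2) atTop (nhds 0) := by
      apply tendsto_of_tendsto_of_tendsto_of_le_of_le' tendsto_const_nhds
        (show Tendsto (fun k => δ (ℓfun k - (j + 1)) / c) atTop (nhds 0) by
          simpa using hδt.div_const c)
      · exact Eventually.of_forall fun k => sq_nonneg _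
      · refine Eventually.of_forall fun k => ?_
        rw [le_div_iff₀ hcpos]
        have := hδ_lb (ℓfun k - (j + 1))
        linarith
    have := (Real.continuous_sqrt.tendsto 0).comp hsq
    simp only [Real.sqrt_zero] at this
    refine this.congr fun k => ?_
    simp [Real.sqrt_sq (norm_nonneg _)]
  have stepQ : ∀ j : ℕ, Tendsto (fun k => Fs (ℓfun k - j)) atTop (nhds Minf) →
      Tendsto (fun k => ‖V (ℓfun k - (j + 1))‖) atTop (nhds 0) →
      Tendsto (fun k => Fs (ℓfun k - (j + 1))) atTop (nhds Minf) := by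
    intro j hQ hR
    have hdist : Tendsto
        (fun k => dist (X (ℓfun k - (j + 1))) (X (ℓfun k - j))) atTop (nhds 0) := by
      apply tendsto_of_tendsto_of_tendsto_of_le_of_le' tendsto_const_nhds
        (show Tendsto (fun k => M₁ * ‖V (ℓfun k - (j + 1))‖) atTop (nhds 0) by
          simpa using hR.const_mul M₁)
      · exact Eventually.of_forall fun k => dist_nonneg
      · filter_upwards [hℓtend.eventually_ge_atTop (j + 1)] with k hk
        have he : (ℓfun k - (j + 1)) + 1 = ℓfun k - j := by omega
        set i := ℓfun k - (j + 1)
        have h1 := hstep i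
        have h2 := (hα i).1
        have h3 := (hα i).2
        have h4 : dist (X i) (X (i + 1)) = ‖X (i + 1) - X i‖ := by
          rw [dist_comm, dist_eq_norm]
        rw [← he, h4]
        have h5 : M₁ * α i * ‖V i‖ ≤ M₁ * ‖V i‖ := by
          nlinarith [mul_nonneg (mul_nonneg hM₁.le (sub_nonneg.mpr h3)) (norm_nonneg (V i))]
        linarith
    rw [Metric.tendsto_nhds]
    intro ε hε
    obtain ⟨δ', hδ'pos, hδ'⟩ := hUC (ε / 2) (half_pos hε)
    have hd2 : ∀ᶠ k in atTop, dist (X (ℓfun k - (j + 1))) (X (ℓfun k - j)) < δ' := by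
      have := Metric.tendsto_nhds.mp hdist δ' hδ'pos
      filter_upwards [this] with k hk
      rwa [Real.dist_eq, sub_zero, abs_of_nonneg dist_nonneg] at hk
    have hq2 : ∀ᶠ k in atTop, dist (Fs (ℓfun k - j)) Minf < ε / 2 :=
      Metric.tendsto_nhds.mp hQ (ε / 2) (half_pos hε)
    filter_upwards [hd2, hq2] with k h1 h2
    have hFF : dist (FF (X (ℓfun k - (j + 1)))) (FF (X (ℓfun k - j))) < ε / 2 :=
      hδ' _ (hXSt _) _ (hXSt _) h1
    have heq1 : Fs (ℓfun k - (j + 1)) = FF (X (ℓfun k - (j + 1))) := rfl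
    have heq2 : Fs (ℓfun k - j) = FF (X (ℓfun k - j)) := rfl
    calc dist (Fs (ℓfun k - (j + 1))) Minf
        ≤ dist (Fs (ℓfun k - (j + 1))) (Fs (ℓfun k - j)) + dist (Fs (ℓfun k - j)) Minf :=
          dist_triangle _ _ _
      _ < ε / 2 + ε / 2 := by
          rw [heq1, heq2]
          exact add_lt_add hFF h2
      _ = ε := by ring
  have main : ∀ j : ℕ, Tendsto (fun k => Fs (ℓfun k - j)) atTop (nhds Minf) ∧
      Tendsto (fun k => ‖V (ℓfun k - (j + 1))‖) atTop (nhds 0) := by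
    intro j
    induction j with
    | zero =>
      have hQ0 : Tendsto (fun k => Fs (ℓfun k - 0)) atTop (nhds Minf) := by
        refine hMtend.congr fun k => ?_
        rw [Nat.sub_zero, ← hℓeq k]
      exact ⟨hQ0, stepR 0 hQ0⟩
    | succ j ih =>
      have hQ := stepQ j ih.1 ih.2
      exact ⟨hQ, stepR (j + 1) hQ⟩
  -- V tends to zero globally
  have hVall : Tendsto (fun k => V k) atTop (nhds 0) := by
    refine tendsto_zero_iff_norm_tendsto_zero.mpr ?_
    rw [Metric.tendsto_atTop]
    intro ε hε
    have hNj : ∀ j : ℕ, ∃ N, ∀ k ≥ N, ‖V (ℓfun k - (j + 1))‖ < ε := by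
      intro j
      obtain ⟨N, hN⟩ := Metric.tendsto_atTop.mp (main j).2 ε hε
      exact ⟨N, fun k hk => by
        have := hN k hk
        rwa [Real.dist_eq, sub_zero, abs_of_nonneg (norm_nonneg _)] at this⟩
    choose Nf hNf using hNj
    refine ⟨(Finset.range (m + 1)).sup Nf, fun k hk => ?_⟩
    set k' := k + m + 1 with hk'def
    have hmem := Finset.mem_Icc.mp (hℓmem k')
    have hub2 : ℓfun k' ≤ k' := hmem.2
    have hlb2 : k + 1 ≤ ℓfun k' := by omega
    set j := ℓfun k' - (k + 1) with hjdef
    have hjm : j ≤ m := by omega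
    have hNle : Nf j ≤ k :=
      le_trans (Finset.le_sup (Finset.mem_range.mpr (by omega))) hk
    have h6 := hNf j k' (by omega)
    have he : ℓfun k' - (j + 1) = k := by omega
    rw [he] at h6
    rwa [Real.dist_eq, sub_zero, abs_of_nonneg (norm_nonneg _)]
  have hVφ : Tendsto (fun i => V (φ i)) atTop (nhds 0) :=
    hVall.comp hφmono.tendsto_atTop
  -- Xs is on the Stiefel manifold
  have hXsSt : Xsᵀ * Xs = 1 := by
    have hc : Continuous fun Y : Matrix (Fin n) (Fin r) ℝ => Yᵀ * Y :=
      (continuous_id.matrix_transpose).matrix_mul continuous_id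
    have h1 : Tendsto (fun i => (X (φ i))ᵀ * X (φ i)) atTop (nhds (Xsᵀ * Xs)) :=
      (hc.tendsto Xs).comp hφtend
    have h2 : Tendsto (fun i => (X (φ i))ᵀ * X (φ i)) atTop
        (nhds (1 : Matrix (Fin r) (Fin r) ℝ)) := by
      refine tendsto_const_nhds.congr fun i => ?_
      rw [hXSt (φ i)]
    exact tendsto_nhds_unique h1 h2
  -- norm bound on B k (V k)
  have hformexp : ∀ k (x y : Matrix (Fin n) (Fin r) ℝ) (t : ℝ),
      tinner (x + t • y) (B k (x + t • y)) =
        tinner x (B k x) + 2 * t * tinner x (B k y) + t ^ 2 * tinner y (B k y) := by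
    intro k x y t
    rw [map_add, _root_.map_smul, tinner_add_left, tinner_add_right, tinner_add_right,
      tinner_smul_right, tinner_smul_left, tinner_smul_left, tinner_smul_right]
    have hyx : tinner y (B k x) = tinner x (B k y) := by
      rw [hBsa k y x, tinner_comm]
    rw [hyx]
    ring
  have hformCS : ∀ k (x y : Matrix (Fin n) (Fin r) ℝ), IsTangent (X k) x → IsTangent (X k) y →
      (tinner x (B k y)) ^ 2 ≤ tinner x (B k x) * tinner y (B k y) := by
    intro k x y hx hy
    have hpos : ∀ t : ℝ, 0 ≤ tinner y (B k y) * (t * t) + (2 * tinner x (B k y)) * t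
        + tinner x (B k x) := by
      intro t
      have htan : IsTangent (X k) (x + t • y) := hx.add' (hy.smul' t)
      have h1 := (hBbound k _ htan).1
      have h2 : 0 ≤ tinner (x + t • y) (B k (x + t • y)) := le_trans (by positivity) h1
      rw [hformexp k x y t] at h2
      nlinarith
    have := discrim_le_zero hpos
    unfold discrim at this
    nlinarith
  have hBVnorm : ∀ k, ‖B k (V k)‖ ≤ κ₂ * ‖V k‖ := by
    intro k
    set U := B k (V k) with hUdef
    have hUt : IsTangent (X k) U := hBtan k (V k) (hVt k)
    have hVtk := hVt k
    have hUU : tinner U U = tinner U (B k (V k)) := by rw [hUdef]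
    have hb2 := hformCS k U (V k) hUt hVtk
    have hQU := (hBbound k U hUt).2
    have hQV := (hBbound k (V k) hVtk).2
    have hQU0 : 0 ≤ tinner U (B k U) := le_trans (by positivity) (hBbound k U hUt).1
    have hQV0 : 0 ≤ tinner (V k) (B k (V k)) := le_trans (by positivity) (hBbound k (V k) hVtk).1
    have hnormU : tinner U U = ‖U‖ ^ 2 := tinner_self U
    have hκ₂pos : 0 < κ₂ := lt_of_lt_of_le hκ₁ hκ₁₂
    rcases eq_or_lt_of_le (norm_nonneg U) with hU0 | hU0
    · rw [← hU0]
      positivity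
    · -- ‖U‖^4 ≤ κ₂^2 ‖U‖^2 ‖V‖^2
      have h4 : (‖U‖ ^ 2) ^ 2 ≤ (κ₂ * ‖U‖ ^ 2) * (κ₂ * ‖V k‖ ^ 2) := by
        calc (‖U‖ ^ 2) ^ 2 = (tinner U (B k (V k))) ^ 2 := by rw [← hUU, hnormU]
          _ ≤ tinner U (B k U) * tinner (V k) (B k (V k)) := hb2
          _ ≤ (κ₂ * ‖U‖ ^ 2) * (κ₂ * ‖V k‖ ^ 2) := by
              apply mul_le_mul hQU hQV hQV0 (by positivity)
      have h7 : ‖U‖ ^ 2 * ‖U‖ ^ 2 ≤ ‖U‖ ^ 2 * (κ₂ ^ 2 * ‖V k‖ ^ 2) := by nlinarith [h4]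
      have h8 : ‖U‖ ^ 2 ≤ (κ₂ * ‖V k‖) ^ 2 := by
        have h9 := le_of_mul_le_mul_left h7 (show 0 < ‖U‖ ^ 2 by positivity)
        nlinarith [h9]
      have h10 := Real.sqrt_le_sqrt h8
      rwa [Real.sqrt_sq (norm_nonneg U), Real.sqrt_sq (by positivity)] at h10
  -- first-order optimality inequality at each k
  have hineq : ∀ k W', IsTangent (X k) W' →
      0 ≤ tinner (g (X k) + B k (V k)) (W' - V k) + (h (X k + W') - h (X k + V k)) := by
    intro k W' hW'
    set D := W' - V k with hDdef
    have hD : IsTangent (X k) D := hW'.sub' (hVt k)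
    have hstep2 : ∀ t : ℝ, 0 < t → t ≤ 1 →
        0 ≤ tinner (g (X k)) D + tinner (B k (V k)) D + t / 2 * tinner D (B k D)
          + (h (X k + W') - h (X k + V k)) := by
      intro t ht ht1
      have htan : IsTangent (X k) (V k + t • D) := (hVt k).add' (hD.smul' t)
      have hm := hmin k _ htan
      have hcv : h (X k + (V k + t • D)) ≤ (1 - t) * h (X k + V k) + t * h (X k + W') := by
        have e0 : (0:ℝ) ≤ 1 - t := by linarith
        have e1 : (1 - t) + t = 1 := by ring
        have hc2 := hconv.2 (Set.mem_univ (X k + V k)) (Set.mem_univ (X k + W')) e0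
          (le_of_lt ht) e1
        have hpt : (1 - t) • (X k + V k) + t • (X k + W') = X k + (V k + t • D) := by
          rw [hDdef]; module
        rw [hpt] at hc2
        simpa using hc2
      have hexp := hformexp k (V k) D t
      have hg2 : tinner (g (X k)) (V k + t • D) =
          tinner (g (X k)) (V k) + t * tinner (g (X k)) D := by
        rw [tinner_add_right, tinner_smul_right]
      rw [hexp, hg2] at hm
      have hcross : tinner (V k) (B k D) = tinner (B k (V k)) D := hBsa k (V k) D
      rw [hcross] at hm
      have h2 : 0 ≤ t * tinner (g (X k)) D + t * tinner (B k (V k)) D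
          + t ^ 2 / 2 * tinner D (B k D) + t * (h (X k + W') - h (X k + V k)) := by
        linarith
      have e2 : t * (tinner (g (X k)) D + tinner (B k (V k)) D + t / 2 * tinner D (B k D)
          + (h (X k + W') - h (X k + V k)))
          = t * tinner (g (X k)) D + t * tinner (B k (V k)) D
            + t ^ 2 / 2 * tinner D (B k D) + t * (h (X k + W') - h (X k + V k)) := by ring
      have h3 : 0 ≤ t * (tinner (g (X k)) D + tinner (B k (V k)) D + t / 2 * tinner D (B k D)
          + (h (X k + W') - h (X k + V k))) := by rw [e2]; exact h2
      exact nonneg_of_mul_nonneg_right h3 ht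
    -- let t → 0
    set A : ℝ := tinner (g (X k)) D + tinner (B k (V k)) D + (h (X k + W') - h (X k + V k))
      with hAdef
    set C : ℝ := tinner D (B k D) with hCdef
    have hlim : Tendsto (fun i : ℕ => A + (1 / ((i : ℝ) + 1)) / 2 * C) atTop (nhds A) := by
      have h1 : Tendsto (fun i : ℕ => (1 : ℝ) / ((i : ℝ) + 1)) atTop (nhds 0) :=
        tendsto_one_div_add_atTop_nhds_zero_nat
      have h2 := (tendsto_const_nhds : Tendsto (fun _ : ℕ => A) atTop (nhds A)).add
        ((h1.div_const 2).mul_const C)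
      simpa using h2
    have hA : 0 ≤ A := by
      refine ge_of_tendsto hlim (Eventually.of_forall fun i => ?_)
      have hpos : (0:ℝ) < 1 / ((i : ℝ) + 1) := by positivity
      have hle1 : (1 : ℝ) / ((i : ℝ) + 1) ≤ 1 := by
        rw [div_le_one (by positivity)]
        exact le_add_of_nonneg_left (Nat.cast_nonneg i)
      have := hstep2 _ hpos hle1
      rw [hAdef, hCdef]
      linarith
    rw [tinner_add_left]
    rw [hAdef] at hA
    linarith
  -- pass to the limit along the subsequence
  have hkeyXs : ∀ W, IsTangent Xs W → h Xs ≤ h (Xs + W) + tinner (g Xs) W := by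
    intro W hW
    set Wk : ℕ → Matrix (Fin n) (Fin r) ℝ := fun i => projT (X (φ i)) W with hWkdef
    have hWk_tan : ∀ i, IsTangent (X (φ i)) (Wk i) := fun i => isTangent_projT (hXSt (φ i)) W
    have hWk_tend : Tendsto Wk atTop (nhds W) := by
      have hc : Continuous fun Y : Matrix (Fin n) (Fin r) ℝ => projT Y W := continuous_projT W
      have h1 := (hc.tendsto Xs).comp hφtend
      rwa [show projT Xs W = W from projT_of_tangent hW] at h1
    have hgt : Tendsto (fun i => g (X (φ i))) atTop (nhds (g Xs)) :=
      (hcontg.tendsto Xs).comp hφtend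
    have hVnφ : Tendsto (fun i => ‖V (φ i)‖) atTop (nhds 0) := by
      have := (continuous_norm.tendsto (0 : Matrix (Fin n) (Fin r) ℝ)).comp hVφ
      simpa [Function.comp_def] using this
    have hBV : Tendsto (fun i => B (φ i) (V (φ i))) atTop (nhds 0) := by
      refine tendsto_zero_iff_norm_tendsto_zero.mpr ?_
      apply tendsto_of_tendsto_of_tendsto_of_le_of_le' tendsto_const_nhds
        (show Tendsto (fun i => κ₂ * ‖V (φ i)‖) atTop (nhds 0) by
          simpa using hVnφ.const_mul κ₂)
      · exact Eventually.of_forall fun i => norm_nonneg _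
      · exact Eventually.of_forall fun i => hBVnorm (φ i)
    have h1 : Tendsto (fun i => tinner (g (X (φ i)) + B (φ i) (V (φ i))) (Wk i - V (φ i)))
        atTop (nhds (tinner (g Xs + 0) (W - 0))) :=
      tendsto_tinner (hgt.add hBV) (hWk_tend.sub hVφ)
    have h2 : Tendsto (fun i => h (X (φ i) + Wk i)) atTop (nhds (h (Xs + W))) :=
      (hconth.tendsto _).comp (hφtend.add hWk_tend)
    have h3 : Tendsto (fun i => h (X (φ i) + V (φ i))) atTop (nhds (h Xs)) := by
      have := (hconth.tendsto (Xs + 0)).comp (hφtend.add hVφ)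
      simpa [Function.comp_def] using this
    have hsum : Tendsto (fun i => tinner (g (X (φ i)) + B (φ i) (V (φ i))) (Wk i - V (φ i))
        + (h (X (φ i) + Wk i) - h (X (φ i) + V (φ i)))) atTop
        (nhds (tinner (g Xs + 0) (W - 0) + (h (Xs + W) - h Xs))) :=
      h1.add (h2.sub h3)
    have h0 : 0 ≤ tinner (g Xs + 0) (W - 0) + (h (Xs + W) - h Xs) :=
      ge_of_tendsto hsum (Eventually.of_forall fun i => hineq (φ i) (Wk i) (hWk_tan i))
    rw [add_zero, sub_zero] at h0
    linarith
  exact exists_stationary_subgrad h Lh hconv hLiph Xs (g Xs) hXsSt hkeyXs
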